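/- Let (A, R) be a complete filtered Rota–Baxter algebra of weight λ ≠ 0 over a field K of characteristic zero, R̃ := −λ·id_A − R, and let χ_λ : A₁ → A₁ be the unique map with (χ_λ − id)(Aₙ) ⊆ A₂ₙ for all n ≥ 1 and exp(R(χ_λ(x)))·exp(R̃(χ_λ(x))) = exp(−λx) for all x ∈ A₁. Then χ_λ is a bijection of A₁ onto itself with inverse χ_λ⁻¹(x) = −(1/λ)·log(exp(R(x))·exp(R̃(x))) for all x ∈ A₁. -/

import Mathlib

open scoped Classical

/-- A complete filtered algebra over a field `K` of characteristic zero: an associative unital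
`K`-algebra `A` with a decreasing filtration `A = F 0 ⊇ F 1 ⊇ ⋯` by (two-sided, here
`K`-submodules closed under multiplication in the filtered sense) ideals, which is separated
and complete: every series `Σ aₙ` with `aₙ ∈ F n` converges (has a limit in the filtration
topology). -/
structure CompleteFilteredAlgebra (K A : Type*) [Field K] [CharZero K] [Ring A] [Algebra K A] where
  F : ℕ → Submodule K A
  F_zero : F 0 = ⊤
  F_succ_le : ∀ n : ℕ, F (n + 1) ≤ F n
  F_mul : ∀ m n : ℕ, ∀ x ∈ F m, ∀ y ∈ F n, x * y ∈ F (m + n)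
  F_sep : ∀ x : A, (∀ n : ℕ, x ∈ F n) → x = 0
  F_complete : ∀ a : ℕ → A, (∀ n : ℕ, a n ∈ F n) →
    ∃ s : A, ∀ N : ℕ, s - ∑ n ∈ Finset.range N, a n ∈ F N

namespace CompleteFilteredAlgebra

variable {K A : Type*} [Field K] [CharZero K] [Ring A] [Algebra K A]

/-- The exponential `exp x = Σ_{n≥0} xⁿ/n!`, defined (as the limit of its partial sums) for
every `x ∈ F 1`; junk value `0` elsewhere. -/
noncomputable def exp (FA : CompleteFilteredAlgebra K A) (x : A) : A :=
  if h : ∀ n : ℕ, ((n.factorial : K)⁻¹ • x ^ n) ∈ FA.F n then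
    Classical.choose (FA.F_complete _ h)
  else 0

/-- The logarithm `log (1 + y) = Σ_{n≥1} (-1)^(n-1) yⁿ/n`, defined (as the limit of its partial
sums) whenever the argument lies in `1 + F 1`; junk value `0` elsewhere. (The `n = 0` term of
the defining sequence is `0` since `1/0 = 0` in `K`.) -/
noncomputable def log (FA : CompleteFilteredAlgebra K A) (y : A) : A :=
  if h : ∀ n : ℕ, ((((-1 : K) ^ (n - 1)) / (n : K)) • (y - 1) ^ n) ∈ FA.F n then
    Classical.choose (FA.F_complete _ h)
  else 0

end CompleteFilteredAlgebra

section PowerSeriesPart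

open PowerSeries

variable (K : Type*) [Field K] [CharZero K]

lemma CFA.psDerivExp : d⁄dX K (PowerSeries.exp K) = PowerSeries.exp K := by
  ext n
  rw [PowerSeries.coeff_derivative, PowerSeries.coeff_exp, PowerSeries.coeff_exp]
  rw [show ((n : K) + 1) = algebraMap ℚ K ((n : ℚ) + 1) by push_cast; ring, ← map_mul]
  congr 1
  rw [Nat.factorial_succ]
  push_cast
  rw [div_mul_eq_mul_div, div_eq_div_iff (by positivity) (by positivity)]
  ring

lemma CFA.key_coeff (N m : ℕ) (hm : m < N) :
    PowerSeries.coeff (R := K) m (∑ k ∈ Finset.range N,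
      (((-1 : K) ^ (k - 1)) / (k : K)) • (PowerSeries.exp K - 1) ^ k) =
    if m = 1 then 1 else 0 := by
  obtain ⟨M, rfl⟩ : ∃ M, N = M + 1 := ⟨N - 1, by omega⟩
  set u : K⟦X⟧ := PowerSeries.exp K - 1 with hu
  have hcu : constantCoeff (R := K) u = 0 := by
    simp [hu, PowerSeries.constantCoeff_exp]
  have hXu : (X : K⟦X⟧) ∣ u := PowerSeries.X_dvd_iff.mpr hcu
  set L : K⟦X⟧ := ∑ k ∈ Finset.range (M + 1),
      (((-1 : K) ^ (k - 1)) / (k : K)) • u ^ k with hL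
  have hDu : d⁄dX K u = PowerSeries.exp K := by
    rw [hu, map_sub, Derivation.map_one_eq_zero, CFA.psDerivExp, sub_zero]
  have hDL : d⁄dX K L = 1 - (-u) ^ M := by
    rw [hL, map_sum]
    rw [Finset.sum_range_succ']
    have h0 : d⁄dX K ((((-1 : K) ^ (0 - 1)) / ((0 : ℕ) : K)) • u ^ 0) = 0 := by
      simp
    rw [h0, add_zero]
    have hterm : ∀ k : ℕ,
        d⁄dX K ((((-1 : K) ^ (k + 1 - 1)) / ((k + 1 : ℕ) : K)) • u ^ (k + 1)) =
          (-u) ^ k * PowerSeries.exp K := by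
      intro k
      rw [Derivation.map_smul, Derivation.leibniz_pow, hDu]
      have : (k + 1 : ℕ) • u ^ (k + 1 - 1) • PowerSeries.exp K
          = ((k + 1 : ℕ) : K) • (u ^ k • PowerSeries.exp K) := by
        rw [Nat.cast_smul_eq_nsmul]
        norm_num
      rw [this, smul_smul]
      have hne : ((k + 1 : ℕ) : K) ≠ 0 := Nat.cast_ne_zero.mpr (Nat.succ_ne_zero k)
      rw [show ((-1 : K) ^ (k + 1 - 1)) / ((k + 1 : ℕ) : K) * ((k + 1 : ℕ) : K)
          = (-1 : K) ^ k by rw [Nat.add_sub_cancel, div_mul_cancel₀ _ hne]]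
      rw [smul_eq_mul, ← smul_mul_assoc, ← smul_pow, neg_one_smul]
    rw [Finset.sum_congr rfl fun k _ => hterm k]
    have hgeom : (∑ k ∈ Finset.range M, (-u) ^ k) * (-(PowerSeries.exp K))
        = (-u) ^ M - 1 := by
      have := geom_sum_mul (-u) M
      rw [show (-u) - 1 = -(PowerSeries.exp K) by rw [hu]; ring] at this
      exact this
    have : (∑ k ∈ Finset.range M, (-u) ^ k) * PowerSeries.exp K = 1 - (-u) ^ M := by
      have h := hgeom
      rw [mul_neg] at h
      linear_combination -h
    rw [← this, Finset.sum_mul]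
  rcases Nat.eq_zero_or_pos m with rfl | hm1
  · simp only [if_neg (by norm_num : (0 : ℕ) ≠ 1)]
    rw [hL, map_sum]
    apply Finset.sum_eq_zero
    intro k _
    rcases Nat.eq_zero_or_pos k with rfl | hk
    · norm_num
    · rw [map_smul, PowerSeries.coeff_zero_eq_constantCoeff_apply, map_pow, hcu,
        zero_pow (by omega), smul_zero]
  · obtain ⟨j, rfl⟩ : ∃ j, m = j + 1 := ⟨m - 1, by omega⟩
    have hj : j < M := by omega
    have hc : PowerSeries.coeff (R := K) j (d⁄dX K L) = if j = 0 then 1 else 0 := by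
      rw [hDL, map_sub, PowerSeries.coeff_one]
      have : PowerSeries.coeff (R := K) j ((-u) ^ M) = 0 := by
        have : (X : K⟦X⟧) ^ M ∣ (-u) ^ M :=
          pow_dvd_pow_of_dvd ((dvd_neg).mpr hXu) M
        exact (PowerSeries.X_pow_dvd_iff.mp this) j hj
      rw [this, sub_zero]
    rw [PowerSeries.coeff_derivative] at hc
    have hne : ((j : K) + 1) ≠ 0 := Nat.cast_add_one_ne_zero j
    rcases Nat.eq_zero_or_pos j with rfl | hj0
    · simp only [Nat.cast_zero, zero_add, mul_one, if_pos rfl] at hc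
      simpa using hc
    · rw [if_neg (by omega)] at hc
      have := mul_eq_zero.mp hc
      rw [if_neg (by omega)]
      tauto

end PowerSeriesPart

namespace CompleteFilteredAlgebra

variable {K A : Type*} [Field K] [CharZero K] [Ring A] [Algebra K A]
variable (FA : CompleteFilteredAlgebra K A)

lemma F_le {m n : ℕ} (h : m ≤ n) : FA.F n ≤ FA.F m := by
  induction h with
  | refl => exact le_rfl
  | step _ ih => exact le_trans (FA.F_succ_le _) (by assumption)

lemma pow_mem {x : A} (hx : x ∈ FA.F 1) (n : ℕ) : x ^ n ∈ FA.F n := by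
  induction n with
  | zero => rw [FA.F_zero]; trivial
  | succ n ih =>
      have := FA.F_mul 1 n x hx _ ih
      rw [pow_succ']
      simpa [Nat.add_comm] using this

lemma pow_sub_pow_mem {x y : A} {n : ℕ} (hx : x ∈ FA.F 1) (hy : y ∈ FA.F 1)
    (hxy : x - y ∈ FA.F n) (k : ℕ) : x ^ (k + 1) - y ^ (k + 1) ∈ FA.F (n + k) := by
  induction k with
  | zero => simpa using hxy
  | succ k ih =>
      have h1 : x * (x ^ (k + 1) - y ^ (k + 1)) ∈ FA.F (1 + (n + k)) :=
        FA.F_mul 1 (n + k) x hx _ ih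
      have h2 : (x - y) * y ^ (k + 1) ∈ FA.F (n + (k + 1)) :=
        FA.F_mul n (k + 1) _ hxy _ (FA.pow_mem hy (k + 1))
      have heq : x ^ (k + 1 + 1) - y ^ (k + 1 + 1)
          = x * (x ^ (k + 1) - y ^ (k + 1)) + (x - y) * y ^ (k + 1) := by
        rw [pow_succ' x (k + 1), pow_succ' y (k + 1), mul_sub, sub_mul]
        abel
      rw [heq]
      have h1' : x * (x ^ (k + 1) - y ^ (k + 1)) ∈ FA.F (n + (k + 1)) := by
        have : 1 + (n + k) = n + (k + 1) := by omega
        rwa [this] at h1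
      exact add_mem h1' h2

lemma exp_hyp {x : A} (hx : x ∈ FA.F 1) :
    ∀ n : ℕ, ((n.factorial : K)⁻¹ • x ^ n) ∈ FA.F n := fun n =>
  Submodule.smul_mem _ _ (FA.pow_mem hx n)

lemma exp_spec {x : A} (hx : x ∈ FA.F 1) (N : ℕ) :
    FA.exp x - ∑ n ∈ Finset.range N, ((n.factorial : K)⁻¹ • x ^ n) ∈ FA.F N := by
  have h := FA.exp_hyp hx
  rw [CompleteFilteredAlgebra.exp, dif_pos h]
  exact Classical.choose_spec (FA.F_complete _ h) N

lemma log_hyp {y : A} (hy : y - 1 ∈ FA.F 1) :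
    ∀ n : ℕ, ((((-1 : K) ^ (n - 1)) / (n : K)) • (y - 1) ^ n) ∈ FA.F n := fun n => by
  rw [div_eq_mul_inv, mul_comm, ← smul_smul]
  exact Submodule.smul_mem _ _ (Submodule.smul_mem _ _ (FA.pow_mem hy n))

lemma log_spec {y : A} (hy : y - 1 ∈ FA.F 1) (N : ℕ) :
    FA.log y - ∑ n ∈ Finset.range N, ((((-1 : K) ^ (n - 1)) / (n : K)) • (y - 1) ^ n)
      ∈ FA.F N := by
  have h := FA.log_hyp hy
  rw [CompleteFilteredAlgebra.log, dif_pos h]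
  exact Classical.choose_spec (FA.F_complete _ h) N

lemma eq_of_sub_mem {x y : A} (h : ∀ n : ℕ, x - y ∈ FA.F n) : x = y :=
  sub_eq_zero.mp (FA.F_sep _ h)

lemma exp_sub_one_mem {x : A} (hx : x ∈ FA.F 1) : FA.exp x - 1 ∈ FA.F 1 := by
  have := FA.exp_spec hx 1
  simpa using this

lemma log_mem {y : A} (hy : y - 1 ∈ FA.F 1) : FA.log y ∈ FA.F 1 := by
  have := FA.log_spec hy 1
  simpa using this

lemma sum_smul_pow_sub_mem (c : ℕ → K) (hc1 : c 1 = 1) {x y : A} {n : ℕ}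
    (hx : x ∈ FA.F 1) (hy : y ∈ FA.F 1) (hxy : x - y ∈ FA.F n) (hn : 1 ≤ n)
    {N : ℕ} (hN : 2 ≤ N) :
    (∑ k ∈ Finset.range N, c k • x ^ k) - (∑ k ∈ Finset.range N, c k • y ^ k) - (x - y)
      ∈ FA.F (n + 1) := by
  induction N, hN using Nat.le_induction with
  | base =>
      have : (∑ k ∈ Finset.range 2, c k • x ^ k) - (∑ k ∈ Finset.range 2, c k • y ^ k)
          - (x - y) = 0 := by
        simp only [Finset.sum_range_succ, Finset.sum_range_zero, pow_zero, pow_one,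
          hc1, one_smul, zero_add]
        abel
      rw [this]
      exact zero_mem _
  | succ N hN ih =>
      have hterm : c N • (x ^ N - y ^ N) ∈ FA.F (n + 1) := by
        obtain ⟨M, rfl⟩ : ∃ M, N = M + 1 := ⟨N - 1, by omega⟩
        have h := FA.pow_sub_pow_mem hx hy hxy M
        have hle : n + 1 ≤ n + M := by omega
        exact Submodule.smul_mem _ _ (FA.F_le hle h)
      have heq : (∑ k ∈ Finset.range (N + 1), c k • x ^ k)
          - (∑ k ∈ Finset.range (N + 1), c k • y ^ k) - (x - y)
          = ((∑ k ∈ Finset.range N, c k • x ^ k)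
            - (∑ k ∈ Finset.range N, c k • y ^ k) - (x - y)) + c N • (x ^ N - y ^ N) := by
        rw [Finset.sum_range_succ, Finset.sum_range_succ, smul_sub]
        abel
      rw [heq]
      exact add_mem ih hterm

lemma exp_diff {x y : A} {n : ℕ} (hx : x ∈ FA.F 1) (hy : y ∈ FA.F 1)
    (hxy : x - y ∈ FA.F n) (hn : 1 ≤ n) :
    (FA.exp x - FA.exp y) - (x - y) ∈ FA.F (n + 1) := by
  have h1 := FA.exp_spec hx (n + 1)
  have h2 := FA.exp_spec hy (n + 1)
  have h3 := FA.sum_smul_pow_sub_mem (fun k => ((k.factorial : K)⁻¹))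
    (by norm_num) hx hy hxy hn (N := n + 1) (by omega)
  have heq : (FA.exp x - FA.exp y) - (x - y)
      = (FA.exp x - ∑ k ∈ Finset.range (n + 1), ((k.factorial : K)⁻¹ • x ^ k))
        - (FA.exp y - ∑ k ∈ Finset.range (n + 1), ((k.factorial : K)⁻¹ • y ^ k))
        + ((∑ k ∈ Finset.range (n + 1), ((k.factorial : K)⁻¹ • x ^ k))
          - (∑ k ∈ Finset.range (n + 1), ((k.factorial : K)⁻¹ • y ^ k)) - (x - y)) := by
    abel
  rw [heq]
  exact add_mem (sub_mem h1 h2) h3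

lemma log_diff {y₁ y₂ : A} {n : ℕ} (h1 : y₁ - 1 ∈ FA.F 1) (h2 : y₂ - 1 ∈ FA.F 1)
    (h : y₁ - y₂ ∈ FA.F n) (hn : 1 ≤ n) :
    (FA.log y₁ - FA.log y₂) - (y₁ - y₂) ∈ FA.F (n + 1) := by
  have hs1 := FA.log_spec h1 (n + 1)
  have hs2 := FA.log_spec h2 (n + 1)
  have hd : (y₁ - 1) - (y₂ - 1) ∈ FA.F n := by
    have : (y₁ - 1) - (y₂ - 1) = y₁ - y₂ := by abel
    rwa [this]
  have h3 := FA.sum_smul_pow_sub_mem (fun k => (((-1 : K) ^ (k - 1)) / (k : K)))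
    (by norm_num) h1 h2 hd hn (N := n + 1) (by omega)
  have heq : (FA.log y₁ - FA.log y₂) - (y₁ - y₂)
      = (FA.log y₁ - ∑ k ∈ Finset.range (n + 1),
            ((((-1 : K) ^ (k - 1)) / (k : K)) • (y₁ - 1) ^ k))
        - (FA.log y₂ - ∑ k ∈ Finset.range (n + 1),
            ((((-1 : K) ^ (k - 1)) / (k : K)) • (y₂ - 1) ^ k))
        + ((∑ k ∈ Finset.range (n + 1), ((((-1 : K) ^ (k - 1)) / (k : K)) • (y₁ - 1) ^ k))
          - (∑ k ∈ Finset.range (n + 1), ((((-1 : K) ^ (k - 1)) / (k : K)) • (y₂ - 1) ^ k))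
          - ((y₁ - 1) - (y₂ - 1))) := by
    abel
  rw [heq]
  exact add_mem (sub_mem hs1 hs2) h3

lemma log_injOn {y₁ y₂ : A} (h1 : y₁ - 1 ∈ FA.F 1) (h2 : y₂ - 1 ∈ FA.F 1)
    (h : FA.log y₁ = FA.log y₂) : y₁ = y₂ := by
  apply FA.eq_of_sub_mem
  have key : ∀ n : ℕ, y₁ - y₂ ∈ FA.F (n + 1) := by
    intro n
    induction n with
    | zero =>
        have : y₁ - y₂ = (y₁ - 1) - (y₂ - 1) := by abel
        rw [this]; exact sub_mem h1 h2
    | succ n ih =>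
        have := FA.log_diff h1 h2 ih (by omega)
        rw [h, sub_self, zero_sub] at this
        simpa using (neg_mem this : -(-(y₁ - y₂)) ∈ _)
  intro n
  cases n with
  | zero => rw [FA.F_zero]; trivial
  | succ n => exact key n
lemma poly_step {z : A} (hz : z ∈ FA.F 1) {N : ℕ} (hN : 1 ≤ N) :
    (∑ k ∈ Finset.range N, (((-1 : K) ^ (k - 1)) / (k : K)) •
      ((∑ j ∈ Finset.range N, ((j.factorial : K)⁻¹ • z ^ j)) - 1) ^ k) - z ∈ FA.F N := by
  classical
  set c : ℕ → K := fun k => ((-1 : K) ^ (k - 1)) / (k : K) with hc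
  set p : Polynomial K :=
    (∑ j ∈ Finset.range N, Polynomial.C ((j.factorial : K)⁻¹) * Polynomial.X ^ j) - 1 with hp
  set q : Polynomial K := ∑ k ∈ Finset.range N, Polynomial.C (c k) * p ^ k with hq
  have haevp : Polynomial.aeval z p
      = (∑ j ∈ Finset.range N, ((j.factorial : K)⁻¹ • z ^ j)) - 1 := by
    rw [hp, map_sub, map_one, map_sum]
    congr 1
    refine Finset.sum_congr rfl fun j _ => ?_
    rw [map_mul, Polynomial.aeval_C, map_pow, Polynomial.aeval_X, ← Algebra.smul_def]
  have haevq : Polynomial.aeval z q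
      = ∑ k ∈ Finset.range N, c k •
          ((∑ j ∈ Finset.range N, ((j.factorial : K)⁻¹ • z ^ j)) - 1) ^ k := by
    rw [hq, map_sum]
    refine Finset.sum_congr rfl fun k _ => ?_
    rw [map_mul, Polynomial.aeval_C, map_pow, haevp, ← Algebra.smul_def]
  -- coefficients of q below N
  have hpu : ∀ m, m < N →
      PowerSeries.coeff (R := K) m (p : PowerSeries K)
        = PowerSeries.coeff (R := K) m (PowerSeries.exp K - 1) := by
    intro m hm
    rw [Polynomial.coeff_coe, map_sub, PowerSeries.coeff_exp, PowerSeries.coeff_one]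
    rw [hp, Polynomial.coeff_sub, Polynomial.finset_sum_coeff]
    have : ∀ j ∈ Finset.range N,
        (Polynomial.C ((j.factorial : K)⁻¹) * Polynomial.X ^ j).coeff m
          = if j = m then ((j.factorial : K)⁻¹) else 0 := by
      intro j _
      rw [Polynomial.coeff_C_mul, Polynomial.coeff_X_pow]
      by_cases h : m = j
      · simp [h]
      · simp [h, Ne.symm h]
    rw [Finset.sum_congr rfl this, Finset.sum_ite_eq' (Finset.range N)]
    rw [if_pos (Finset.mem_range.mpr hm)]
    have : algebraMap ℚ K (1 / (m.factorial : ℚ)) = ((m.factorial : K))⁻¹ := by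
      rw [eq_ratCast]
      push_cast
      rw [one_div]
    rw [this, Polynomial.coeff_one]
  have hdvd : (PowerSeries.X : PowerSeries K) ^ N
      ∣ ((p : PowerSeries K) - (PowerSeries.exp K - 1)) := by
    rw [PowerSeries.X_pow_dvd_iff]
    intro m hm
    rw [map_sub, hpu m hm, sub_self]
  have hdvdk : ∀ k : ℕ, (PowerSeries.X : PowerSeries K) ^ N
      ∣ ((p : PowerSeries K) ^ k - (PowerSeries.exp K - 1) ^ k) := fun k =>
    dvd_trans hdvd (sub_dvd_pow_sub_pow _ _ k)
  have hqcoeff : ∀ j, j < N → q.coeff j = if j = 1 then 1 else 0 := by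
    intro j hj
    rw [← Polynomial.coeff_coe]
    have hqcoe : (q : PowerSeries K)
        = ∑ k ∈ Finset.range N, c k • (p : PowerSeries K) ^ k := by
      rw [hq, ← Polynomial.coeToPowerSeries.ringHom_apply, map_sum]
      refine Finset.sum_congr rfl fun k _ => ?_
      rw [map_mul, map_pow, Polynomial.coeToPowerSeries.ringHom_apply,
        Polynomial.coeToPowerSeries.ringHom_apply, Polynomial.coe_C,
        ← PowerSeries.smul_eq_C_mul]
    rw [hqcoe]
    have : PowerSeries.coeff (R := K) j (∑ k ∈ Finset.range N, c k • (p : PowerSeries K) ^ k)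
        = PowerSeries.coeff (R := K) j (∑ k ∈ Finset.range N,
            c k • (PowerSeries.exp K - 1) ^ k) := by
      rw [map_sum, map_sum]
      refine Finset.sum_congr rfl fun k _ => ?_
      rw [map_smul, map_smul]
      congr 1
      have := PowerSeries.X_pow_dvd_iff.mp (hdvdk k) j hj
      rw [map_sub, sub_eq_zero] at this
      exact this
    rw [this, hc]
    exact CFA.key_coeff K N j hj
  -- conclude
  have hqX : Polynomial.aeval z (q - Polynomial.X) ∈ FA.F N := by
    rw [Polynomial.aeval_eq_sum_range]
    apply Submodule.sum_mem
    intro i _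
    by_cases hi : i < N
    · have : (q - Polynomial.X).coeff i = 0 := by
        rw [Polynomial.coeff_sub, hqcoeff i hi, Polynomial.coeff_X]
        by_cases h1 : i = 1
        · simp [h1]
        · simp [h1, Ne.symm h1]
      rw [this, zero_smul]
      exact zero_mem _
    · exact Submodule.smul_mem _ _ (FA.F_le (by omega) (FA.pow_mem hz i))
  rw [map_sub, Polynomial.aeval_X, haevq] at hqX
  exact hqX

lemma log_exp {x : A} (hx : x ∈ FA.F 1) : FA.log (FA.exp x) = x := by
  apply FA.eq_of_sub_mem
  intro N
  rcases Nat.eq_zero_or_pos N with rfl | hN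
  · rw [FA.F_zero]; trivial
  have hu : FA.exp x - 1 ∈ FA.F 1 := FA.exp_sub_one_mem hx
  set w : A := (∑ j ∈ Finset.range N, ((j.factorial : K)⁻¹ • x ^ j)) - 1 with hw
  have hwmem : w ∈ FA.F 1 := by
    obtain ⟨M, rfl⟩ : ∃ M, N = M + 1 := ⟨N - 1, by omega⟩
    rw [hw, Finset.sum_range_succ']
    simp only [Nat.factorial_zero, Nat.cast_one, inv_one, pow_zero, one_smul,
      add_sub_cancel_right]
    apply Submodule.sum_mem
    intro i _
    exact Submodule.smul_mem _ _ (FA.F_le (by omega) (FA.pow_mem hx (i + 1)))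
  have huw : (FA.exp x - 1) - w ∈ FA.F N := by
    have := FA.exp_spec hx N
    have heq : (FA.exp x - 1) - w
        = FA.exp x - ∑ j ∈ Finset.range N, ((j.factorial : K)⁻¹ • x ^ j) := by
      rw [hw]; abel
    rwa [heq]
  have h1 := FA.log_spec hu N
  have h2 : (∑ k ∈ Finset.range N, (((-1 : K) ^ (k - 1)) / (k : K)) • (FA.exp x - 1) ^ k)
      - (∑ k ∈ Finset.range N, (((-1 : K) ^ (k - 1)) / (k : K)) • w ^ k) ∈ FA.F N := by
    rw [← Finset.sum_sub_distrib]
    apply Submodule.sum_mem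
    intro k _
    rw [← smul_sub]
    rcases Nat.eq_zero_or_pos k with rfl | hk
    · simp
    · obtain ⟨M, rfl⟩ : ∃ M, k = M + 1 := ⟨k - 1, by omega⟩
      have := FA.pow_sub_pow_mem hu hwmem huw M
      exact Submodule.smul_mem _ _ (FA.F_le (by omega) this)
  have h3 := FA.poly_step hx hN
  have heq : FA.log (FA.exp x) - x
      = (FA.log (FA.exp x) - ∑ k ∈ Finset.range N,
          (((-1 : K) ^ (k - 1)) / (k : K)) • (FA.exp x - 1) ^ k)
        + ((∑ k ∈ Finset.range N, (((-1 : K) ^ (k - 1)) / (k : K)) • (FA.exp x - 1) ^ k)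
          - (∑ k ∈ Finset.range N, (((-1 : K) ^ (k - 1)) / (k : K)) • w ^ k))
        + ((∑ k ∈ Finset.range N, (((-1 : K) ^ (k - 1)) / (k : K)) • w ^ k) - x) := by
    abel
  rw [heq]
  exact add_mem (add_mem h1 h2) (by rw [hw] at *; exact h3)

lemma exp_log {y : A} (hy : y - 1 ∈ FA.F 1) : FA.exp (FA.log y) = y := by
  have h1 : FA.exp (FA.log y) - 1 ∈ FA.F 1 := FA.exp_sub_one_mem (FA.log_mem hy)
  exact FA.log_injOn h1 hy (FA.log_exp (FA.log_mem hy))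

end CompleteFilteredAlgebra

/-- For a complete filtered Rota–Baxter algebra `(A, R)` of weight `lam ≠ 0`
over a field `K` of characteristic zero, with `R̃ := -lam • id - R`, the unique map
`χ_lam : A₁ → A₁` with `(χ_lam - id)(Aₙ) ⊆ A₂ₙ` and
`exp(R(χ_lam x)) * exp(R̃(χ_lam x)) = exp(-lam • x)` is a bijection of `A₁` onto itself, with
inverse `χ_lam⁻¹(x) = -(1/lam) • log(exp(R x) * exp(R̃ x))`. -/
theorem weighted_bch_recursion_inverse {K A : Type*} [Field K] [CharZero K]
    [Ring A] [Algebra K A] (FA : CompleteFilteredAlgebra K A) (lam : K) (hlam : lam ≠ 0)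
    (R : A →ₗ[K] A)
    (hRfil : ∀ n : ℕ, ∀ x ∈ FA.F n, R x ∈ FA.F n)
    (hRB : ∀ x y : A, R x * R y = R (R x * y + x * R y + lam • (x * y)))
    (χ : FA.F 1 → FA.F 1)
    (hdev : ∀ n : ℕ, 1 ≤ n → ∀ x : FA.F 1, (x : A) ∈ FA.F n →
      ((χ x : A) - (x : A)) ∈ FA.F (2 * n))
    (hfact : ∀ x : FA.F 1,
      FA.exp (R (χ x)) * FA.exp (-(lam • (χ x : A)) - R (χ x)) =
        FA.exp (-(lam • (x : A)))) :
    Function.Bijective χ ∧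
    ∃ ψ : FA.F 1 → FA.F 1, Function.LeftInverse ψ χ ∧ Function.RightInverse ψ χ ∧
      ∀ x : FA.F 1, (ψ x : A) =
        -(lam⁻¹ • FA.log (FA.exp (R x) * FA.exp (-(lam • (x : A)) - R x))) := by
  classical
  -- abbreviations
  set E : A → A := fun z => FA.exp (R z) * FA.exp (-(lam • z) - R z) with hE
  have hmem1 : ∀ z : A, z ∈ FA.F 1 → R z ∈ FA.F 1 := fun z hz => hRfil 1 z hz
  have hmem2 : ∀ z : A, z ∈ FA.F 1 → -(lam • z) - R z ∈ FA.F 1 := fun z hz =>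
    sub_mem (neg_mem (Submodule.smul_mem _ _ hz)) (hRfil 1 z hz)
  have hEsub : ∀ z : A, z ∈ FA.F 1 → E z - 1 ∈ FA.F 1 := by
    intro z hz
    have ha := FA.exp_sub_one_mem (hmem1 z hz)
    have hb := FA.exp_sub_one_mem (hmem2 z hz)
    have heq : E z - 1 = (FA.exp (R z) - 1) * (FA.exp (-(lam • z) - R z) - 1)
        + (FA.exp (R z) - 1) + (FA.exp (-(lam • z) - R z) - 1) := by
      rw [hE]
      simp only [mul_sub, sub_mul, one_mul, mul_one]
      abel
    rw [heq]
    exact add_mem (add_mem (FA.F_le (by omega) (FA.F_mul 1 1 _ ha _ hb)) ha) hb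
  -- contraction estimate for E
  have hEdiff : ∀ (x y : A) (n : ℕ), 1 ≤ n → x ∈ FA.F 1 → y ∈ FA.F 1 →
      x - y ∈ FA.F n → E x - E y + lam • (x - y) ∈ FA.F (n + 1) := by
    intro x y n hn hx hy hxy
    have hRd : R x - R y ∈ FA.F n := by
      rw [← map_sub]; exact hRfil n _ hxy
    have hRd' : R x - R y = R x - R y := rfl
    have ha := FA.exp_diff (hmem1 x hx) (hmem1 y hy) hRd hn
    have hbd : (-(lam • x) - R x) - (-(lam • y) - R y) ∈ FA.F n := by
      have heq : (-(lam • x) - R x) - (-(lam • y) - R y)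
          = -(lam • (x - y)) - (R x - R y) := by
        rw [smul_sub]; abel
      rw [heq]
      exact sub_mem (neg_mem (Submodule.smul_mem _ _ hxy)) hRd
    have hb := FA.exp_diff (hmem2 x hx) (hmem2 y hy) hbd hn
    set a₁ := FA.exp (R x) with ha₁
    set a₂ := FA.exp (R y) with ha₂
    set b₁ := FA.exp (-(lam • x) - R x) with hb₁
    set b₂ := FA.exp (-(lam • y) - R y) with hb₂
    have hamem : a₁ - a₂ ∈ FA.F n := by
      have heq : a₁ - a₂ = ((a₁ - a₂) - (R x - R y)) + (R x - R y) := by abel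
      rw [heq]
      exact add_mem (FA.F_le (by omega) ha) hRd
    have hbmem : b₁ - b₂ ∈ FA.F n := by
      have heq : b₁ - b₂ = ((b₁ - b₂) - ((-(lam • x) - R x) - (-(lam • y) - R y)))
          + ((-(lam • x) - R x) - (-(lam • y) - R y)) := by abel
      rw [heq]
      exact add_mem (FA.F_le (by omega) hb) hbd
    have hprod1 : (a₁ - 1) * (b₁ - b₂) ∈ FA.F (n + 1) := by
      have := FA.F_mul 1 n _ (FA.exp_sub_one_mem (hmem1 x hx)) _ hbmem
      simpa [Nat.add_comm] using this
    have hprod2 : (a₁ - a₂) * (b₂ - 1) ∈ FA.F (n + 1) :=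
      FA.F_mul n 1 _ hamem _ (FA.exp_sub_one_mem (hmem2 y hy))
    have heq : E x - E y + lam • (x - y)
        = (a₁ - 1) * (b₁ - b₂) + (a₁ - a₂) * (b₂ - 1)
          + ((a₁ - a₂) - (R x - R y))
          + ((b₁ - b₂) - ((-(lam • x) - R x) - (-(lam • y) - R y))) := by
      simp only [hE]
      rw [← ha₁, ← ha₂, ← hb₁, ← hb₂, smul_sub]
      simp only [mul_sub, sub_mul, one_mul, mul_one]
      abel
    rw [heq]
    exact add_mem (add_mem (add_mem hprod1 hprod2) ha) hb
  have hEinj : ∀ x y : A, x ∈ FA.F 1 → y ∈ FA.F 1 → E x = E y → x = y := by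
    intro x y hx hy hExy
    apply FA.eq_of_sub_mem
    have key : ∀ n : ℕ, x - y ∈ FA.F (n + 1) := by
      intro n
      induction n with
      | zero => exact sub_mem hx hy
      | succ n ih =>
          have := hEdiff x y (n + 1) (by omega) hx hy ih
          rw [hExy, sub_self, zero_add] at this
          have : x - y = lam⁻¹ • (lam • (x - y)) := by
            rw [smul_smul, inv_mul_cancel₀ hlam, one_smul]
          rw [this]
          have h2 := hEdiff x y (n + 1) (by omega) hx hy ih
          rw [hExy, sub_self, zero_add] at h2
          exact Submodule.smul_mem _ _ h2
    intro n
    cases n with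
    | zero => rw [FA.F_zero]; trivial
    | succ n => exact key n
  -- the inverse map
  have hψmem : ∀ x : FA.F 1, -(lam⁻¹ • FA.log (E (x : A))) ∈ FA.F 1 := fun x =>
    neg_mem (Submodule.smul_mem _ _ (FA.log_mem (hEsub (x : A) x.2)))
  set ψ : FA.F 1 → FA.F 1 := fun x => ⟨-(lam⁻¹ • FA.log (E (x : A))), hψmem x⟩ with hψ
  have hEχ : ∀ x : FA.F 1, E ((χ x : A)) = FA.exp (-(lam • (x : A))) := by
    intro x
    rw [hE]
    exact hfact x
  have hleft : Function.LeftInverse ψ χ := by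
    intro x
    apply Subtype.ext
    show -(lam⁻¹ • FA.log (E ((χ x : A)))) = (x : A)
    rw [hEχ x, FA.log_exp (neg_mem (Submodule.smul_mem _ _ x.2))]
    rw [smul_neg, neg_neg, smul_smul, inv_mul_cancel₀ hlam, one_smul]
  have hright : Function.RightInverse ψ χ := by
    intro x
    apply Subtype.ext
    apply hEinj _ _ (χ (ψ x)).2 x.2
    rw [hEχ (ψ x)]
    have hcoe : -(lam • ((ψ x : FA.F 1) : A)) = FA.log (E (x : A)) := by
      show -(lam • (-(lam⁻¹ • FA.log (E (x : A))))) = FA.log (E (x : A))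
      rw [smul_neg, neg_neg, smul_smul, mul_inv_cancel₀ hlam, one_smul]
    rw [hcoe, FA.exp_log (hEsub (x : A) x.2)]
  refine ⟨⟨hleft.injective, hright.surjective⟩, ψ, hleft, hright, fun x => rfl⟩
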